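/- arXiv:2211.16911 — 3 statements merged into one kernel-verified Lean document; each statement's English description precedes it below -/
import Mathlib

section
/- Let μ be a Borel measure on ℝ², M > 0, and let G ⊂ J ⊂ ℝ/ℤ where J is an interval and G is closed in J. Suppose that for every connected component I of J \ G there exists θ_I ∈ 3I with ‖π_{θ_I}^⊥ μ‖_{L^∞} ≤ M. Then for every x ∈ ℝ² and every r > 0, μ(X(x, J \ G, r)) ≤ C·M·|J \ G|·r, where C is an absolute constant and |·| denotes Lebesgue measure on ℝ/ℤ. -/
open MeasureTheory Real Set
open scoped RealInnerProductSpace ENNReal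

noncomputable section

abbrev Plane := EuclideanSpace ℝ (Fin 2)

/-- The unit vector in direction `θ ∈ ℝ/ℤ`. -/
def dir (θ : ℝ) : Plane :=
  (EuclideanSpace.equiv (Fin 2) ℝ).symm ![Real.cos (2 * Real.pi * θ), Real.sin (2 * Real.pi * θ)]

/-- Projection onto the direction perpendicular to `e_θ`. -/
def projPerp (θ : ℝ) (y : Plane) : ℝ := ⟪y, dir (θ + 1/4)⟫

/-- The truncated cone `X(x, I, r)`. -/
def tcone (x : Plane) (I : Set ℝ) (r : ℝ) : Set Plane :=
  {y | ∃ φ ∈ I, ∃ t : ℝ, y = x + t • dir φ} ∩ Metric.closedBall x r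

/-- For a bounded set `S ⊆ ℝ` (in practice an interval), the concentric triple `3S`:
the interval with the same midpoint and three times the length. -/
def tripleSet (S : Set ℝ) : Set ℝ := Set.Icc (2 * sInf S - sSup S) (2 * sSup S - sInf S)


lemma inner_dir (φ θ : ℝ) : ⟪dir φ, dir θ⟫ = Real.cos (2 * Real.pi * φ - 2 * Real.pi * θ) := by
  simp [dir, PiLp.inner_apply, Fin.sum_univ_two, Real.cos_sub, EuclideanSpace.equiv]; ring

lemma norm_dir (φ : ℝ) : ‖dir φ‖ = 1 := by
  have h : ⟪dir φ, dir φ⟫ = 1 := by rw [inner_dir]; simp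
  have h2 := real_inner_self_eq_norm_mul_norm (dir φ)
  nlinarith [norm_nonneg (dir φ)]

lemma projPerp_line (θ x : Plane → ℝ) : True := trivial

lemma projPerp_add (θ : ℝ) (x : Plane) (t : ℝ) (φ : ℝ) :
    projPerp θ (x + t • dir φ) = projPerp θ x + t * Real.sin (2 * Real.pi * (φ - θ)) := by
  unfold projPerp
  rw [inner_add_left, real_inner_smul_left, inner_dir]
  have : 2 * Real.pi * φ - 2 * Real.pi * (θ + 1/4) = 2 * Real.pi * (φ - θ) - Real.pi / 2 := by ring
  rw [this, Real.cos_sub_pi_div_two]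

lemma measurable_projPerp (θ : ℝ) : Measurable (projPerp θ) :=
  (continuous_id.inner continuous_const).measurable


lemma cone_sub (x : Plane) (r : ℝ) (hr : 0 ≤ r) (I : Set ℝ) (hne : I.Nonempty)
    (hbb : BddBelow I) (hba : BddAbove I) (θ : ℝ) (hθ : θ ∈ tripleSet I) :
    tcone x I r ⊆ projPerp θ ⁻¹' Set.Icc (projPerp θ x - 4 * π * r * (sSup I - sInf I))
      (projPerp θ x + 4 * π * r * (sSup I - sInf I)) := by
  rintro y ⟨⟨φ, hφ, t, rfl⟩, hball⟩
  have ht : |t| ≤ r := by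
    have := Metric.mem_closedBall.1 hball
    rw [dist_eq_norm] at this
    simpa [norm_smul, norm_dir] using this
  have hφI : sInf I ≤ φ ∧ φ ≤ sSup I := ⟨csInf_le hbb hφ, le_csSup hba hφ⟩
  have hθI : 2 * sInf I - sSup I ≤ θ ∧ θ ≤ 2 * sSup I - sInf I := hθ
  have hphidiff : |φ - θ| ≤ 2 * (sSup I - sInf I) := by
    rw [abs_le]; constructor <;> nlinarith [hφI.1, hφI.2, hθI.1, hθI.2]
  have hsinb : |Real.sin (2 * Real.pi * (φ - θ))| ≤ 2 * π * |φ - θ| := by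
    calc |Real.sin (2 * Real.pi * (φ - θ))| ≤ |2 * Real.pi * (φ - θ)| := Real.abs_sin_le_abs
    _ = 2 * π * |φ - θ| := by rw [abs_mul, abs_of_nonneg (by positivity : (0:ℝ) ≤ 2*Real.pi)]
  have key : |t * Real.sin (2 * Real.pi * (φ - θ))| ≤ 4 * π * r * (sSup I - sInf I) := by
    rw [abs_mul]
    calc |t| * |Real.sin (2 * Real.pi * (φ - θ))| ≤ r * (2 * π * (2 * (sSup I - sInf I))) := by
          apply mul_le_mul ht (hsinb.trans (by nlinarith [Real.pi_pos])) (abs_nonneg _)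
            hr
      _ = 4 * π * r * (sSup I - sInf I) := by ring
  rw [Set.mem_preimage, projPerp_add]
  rw [abs_le] at key
  constructor <;> simp <;> linarith [key.1, key.2]

lemma vol_pre (I : Set ℝ) (hI : IsPreconnected I) (hne : I.Nonempty)
    (hbb : BddBelow I) (hba : BddAbove I) :
    volume I = ENNReal.ofReal (sSup I - sInf I) := by
  apply le_antisymm
  · calc volume I ≤ volume (Set.Icc (sInf I) (sSup I)) :=
        measure_mono (subset_Icc_csInf_csSup hbb hba)
      _ = ENNReal.ofReal (sSup I - sInf I) := Real.volume_Icc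
  · calc ENNReal.ofReal (sSup I - sInf I) = volume (Set.Ioo (sInf I) (sSup I)) :=
        Real.volume_Ioo.symm
      _ ≤ volume I := measure_mono (IsConnected.Ioo_csInf_csSup_subset ⟨hne, hI⟩ hbb hba)

lemma comp_est (μ : Measure Plane) (M : ℝ) (hM : 0 ≤ M) (x : Plane) (r : ℝ) (hr : 0 < r)
    (I : Set ℝ) (hI : IsPreconnected I) (hne : I.Nonempty) (hbb : BddBelow I) (hba : BddAbove I)
    (θ : ℝ) (hθ : θ ∈ tripleSet I)
    (hmap : ∀ A : Set ℝ, MeasurableSet A →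
      μ.map (projPerp θ) A ≤ ENNReal.ofReal M * volume A) :
    μ (tcone x I r) ≤ ENNReal.ofReal (32 * M * r) * volume I := by
  set L := sSup I - sInf I with hL
  have hL0 : 0 ≤ L := sub_nonneg.2 (csInf_le_csSup hne hbb hba)
  calc μ (tcone x I r)
      ≤ μ (projPerp θ ⁻¹' Set.Icc (projPerp θ x - 4 * π * r * L) (projPerp θ x + 4 * π * r * L)) :=
        measure_mono (cone_sub x r hr.le I hne hbb hba θ hθ)
    _ = μ.map (projPerp θ) (Set.Icc (projPerp θ x - 4 * π * r * L) (projPerp θ x + 4 * π * r * L)) := by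
        rw [Measure.map_apply (measurable_projPerp θ) measurableSet_Icc]
    _ ≤ ENNReal.ofReal M * volume (Set.Icc (projPerp θ x - 4 * π * r * L) (projPerp θ x + 4 * π * r * L)) :=
        hmap _ measurableSet_Icc
    _ = ENNReal.ofReal M * ENNReal.ofReal (8 * π * r * L) := by
        rw [Real.volume_Icc]; ring_nf
    _ ≤ ENNReal.ofReal (32 * M * r) * ENNReal.ofReal L := by
        rw [← ENNReal.ofReal_mul hM, ← ENNReal.ofReal_mul (by positivity)]
        apply ENNReal.ofReal_le_ofReal
        have h1 : (0:ℝ) ≤ M * r * L := by positivity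
        nlinarith [mul_le_mul_of_nonneg_right Real.pi_le_four h1]
    _ = ENNReal.ofReal (32 * M * r) * volume I := by
        rw [vol_pre I hI hne hbb hba]

lemma exists_rat_in_comp (a b : ℝ) (hab : a < b) (G : Set ℝ) (hG : IsClosed G) (φ : ℝ)
    (hφ : φ ∈ Set.Icc a b \ G) :
    ∃ q : ℚ, (q : ℝ) ∈ connectedComponentIn (Set.Icc a b \ G) φ := by
  obtain ⟨ε, hε, hball⟩ := Metric.isOpen_iff.1 hG.isOpen_compl φ hφ.2
  set c := max a (φ - ε/2) with hc
  set d := min b (φ + ε/2) with hd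
  have haφ : a ≤ φ := hφ.1.1
  have hφb : φ ≤ b := hφ.1.2
  have hcd : c < d := by
    rw [hc, hd, max_lt_iff, lt_min_iff, lt_min_iff]
    refine ⟨⟨hab, by linarith⟩, by linarith, by linarith⟩
  have hsub : Set.Icc c d ⊆ Set.Icc a b \ G := by
    intro z hz
    refine ⟨⟨le_trans (le_max_left _ _) hz.1, le_trans hz.2 (min_le_left _ _)⟩, ?_⟩
    apply hball
    rw [Metric.mem_ball, Real.dist_eq, abs_lt]
    have h1 : φ - ε/2 ≤ z := le_trans (le_max_right _ _) hz.1
    have h2 : z ≤ φ + ε/2 := le_trans hz.2 (min_le_right _ _)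
    constructor <;> linarith
  have hφcd : φ ∈ Set.Icc c d := ⟨max_le haφ (by linarith), le_min hφb (by linarith)⟩
  have hsubcomp := isPreconnected_Icc.subset_connectedComponentIn hφcd hsub
  obtain ⟨q, hq1, hq2⟩ := exists_rat_btwn hcd
  exact ⟨q, hsubcomp ⟨hq1.le, hq2.le⟩⟩

lemma comps_countable (a b : ℝ) (hab : a ≤ b) (G : Set ℝ) (hG : IsClosed G) :
    ((fun φ => connectedComponentIn (Set.Icc a b \ G) φ) '' (Set.Icc a b \ G)).Countable := by
  set U := Set.Icc a b \ G with hU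
  rcases eq_or_lt_of_le hab with heq | hlt
  · apply Set.Countable.mono _ (Set.countable_singleton (connectedComponentIn U a))
    rintro I ⟨φ, hφ, rfl⟩
    have : φ = a := by
      have := hφ.1
      subst heq
      simpa using (this.1.antisymm this.2).symm
    simp [this]
  · apply Set.Countable.mono _ (Set.countable_range (fun q : ℚ => connectedComponentIn U (q : ℝ)))
    rintro I ⟨φ, hφ, rfl⟩
    obtain ⟨q, hq⟩ := exists_rat_in_comp a b hlt G hG φ hφ
    exact ⟨q, (connectedComponentIn_eq hq).symm⟩


/-- If `G` is closed in the interval `J` and for every connected component `I` of `J \ G`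
there is `θ_I ∈ 3I` with `‖π_{θ_I}^⊥ μ‖_∞ ≤ M`, then
`μ(X(x, J \ G, r)) ≤ C·M·|J \ G|·r` for an absolute constant `C`. -/
theorem stmt5 :
    ∃ C : ℝ, 0 < C ∧
      ∀ (μ : Measure Plane) (M a b : ℝ) (G : Set ℝ),
        0 ≤ M → a ≤ b → G ⊆ Set.Icc a b → IsClosed G →
        (∀ φ ∈ Set.Icc a b \ G,
          ∃ θI ∈ tripleSet (connectedComponentIn (Set.Icc a b \ G) φ),
            ∀ A : Set ℝ, MeasurableSet A →
              μ.map (projPerp θI) A ≤ ENNReal.ofReal M * volume A) →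
        ∀ (x : Plane) (r : ℝ), 0 < r →
          μ (tcone x (Set.Icc a b \ G) r) ≤
            ENNReal.ofReal (C * M * r) * volume (Set.Icc a b \ G) := by
  refine ⟨32, by norm_num, ?_⟩
  intro μ M a b G hM hab hGsub hGc hcomp x r hr
  set U := Set.Icc a b \ G with hU
  set S := connectedComponentIn U '' U with hS
  have hScount : S.Countable := by
    have := comps_countable a b hab G hGc
    simpa [hS] using this
  -- basic facts about members of S
  have hIsub : ∀ I ∈ S, I ⊆ U := by
    rintro I ⟨φ, hφ, rfl⟩; exact connectedComponentIn_subset U φ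
  have hImeas : ∀ I ∈ S, MeasurableSet I := by
    rintro I ⟨φ, hφ, rfl⟩
    exact isPreconnected_connectedComponentIn.ordConnected.measurableSet
  have hIdisj : S.PairwiseDisjoint id := by
    rintro I hI I' hI' hne
    obtain ⟨φ, hφ, rfl⟩ := hI
    obtain ⟨φ', hφ', rfl⟩ := hI'
    rw [Function.onFun, id, id, Set.disjoint_left]
    intro z hz hz'
    exact hne (show connectedComponentIn U φ = connectedComponentIn U φ' from
      (connectedComponentIn_eq hz).trans (connectedComponentIn_eq hz').symm)
  -- the cone over U is covered by cones over the components
  have hUnion : tcone x U r ⊆ ⋃ I ∈ S, tcone x I r := by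
    rintro y ⟨⟨φ, hφ, t, rfl⟩, hball⟩
    exact Set.mem_biUnion ⟨φ, hφ, rfl⟩
      ⟨⟨φ, mem_connectedComponentIn hφ, t, rfl⟩, hball⟩
  have hcover : ⋃ I ∈ S, I = U := by
    apply subset_antisymm
    · exact Set.iUnion₂_subset hIsub
    · intro φ hφ
      exact Set.mem_biUnion ⟨φ, hφ, rfl⟩ (mem_connectedComponentIn hφ)
  -- per-component estimate
  have hper : ∀ I ∈ S, μ (tcone x I r) ≤ ENNReal.ofReal (32 * M * r) * volume I := by
    rintro I ⟨φ, hφ, rfl⟩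
    obtain ⟨θ, hθ, hmap⟩ := hcomp φ hφ
    refine comp_est μ M hM x r hr _ isPreconnected_connectedComponentIn
      ⟨φ, mem_connectedComponentIn hφ⟩ ?_ ?_ θ hθ hmap
    · exact bddBelow_Icc.mono ((connectedComponentIn_subset U φ).trans Set.diff_subset)
    · exact bddAbove_Icc.mono ((connectedComponentIn_subset U φ).trans Set.diff_subset)
  calc μ (tcone x U r) ≤ μ (⋃ I ∈ S, tcone x I r) := measure_mono hUnion
    _ ≤ ∑' I : S, μ (tcone x I r) := measure_biUnion_le μ hScount _
    _ ≤ ∑' I : S, ENNReal.ofReal (32 * M * r) * volume (I : Set ℝ) :=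
        ENNReal.tsum_le_tsum (fun I => hper I I.2)
    _ = ENNReal.ofReal (32 * M * r) * ∑' I : S, volume (I : Set ℝ) :=
        ENNReal.tsum_mul_left
    _ = ENNReal.ofReal (32 * M * r) * volume (⋃ I ∈ S, I) :=
        congrArg (ENNReal.ofReal (32 * M * r) * ·)
          (measure_biUnion (f := id) hScount hIdisj hImeas).symm
    _ = ENNReal.ofReal (32 * M * r) * volume U := by rw [hcover]
end
end

section
/- Stopping time packing estimate: let D be a countable family of 'cubes' organized in a tree (each Q ∈ D has a well-defined set of maximal strict descendants), let μ(Q) ≥ 0, and E(Q) ≥ 0 be weights. For R ∈ D, let BCE(R) be the maximal cubes Q ≤ R with Σ_{Q ⊆ S ⊆ R} E(S) ≥ δλ, and let Tree(R) be the cubes ≤ R not strictly below any cube of BCE(R). If the cubes in BCE(R) are pairwise disjoint subsets of R (as sets, with μ additive on disjoint unions), then δλ · Σ_{P ∈ BCE(R)} μ(P) ≤ Σ_{Q ∈ Tree(R)} E(Q) μ(Q). -/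
open MeasureTheory Set
open scoped ENNReal

noncomputable section

variable {α ι : Type*}

/-- The sum `Σ_{S : Q ⊆ S ⊆ R} E(S)` of the weights over the cubes between `Q` and `R`. -/
def sumE (cube : ι → Set α) (Ew : ι → ℝ≥0∞) (Q R : ι) : ℝ≥0∞ :=
  ∑' S : {S : ι // cube Q ⊆ cube S ∧ cube S ⊆ cube R}, Ew S

/-- `BCE(R)`: the maximal cubes `Q ⊆ R` with `Σ_{Q ⊆ S ⊆ R} E(S) ≥ δλ`. -/
def BCE (cube : ι → Set α) (Ew : ι → ℝ≥0∞) (dl : ℝ≥0∞) (R : ι) : Set ι :=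
  {Q | cube Q ⊆ cube R ∧ dl ≤ sumE cube Ew Q R ∧
    ∀ Q', cube Q ⊆ cube Q' → cube Q' ⊆ cube R → dl ≤ sumE cube Ew Q' R →
      cube Q' = cube Q}

/-- `Tree(R)`: the cubes `⊆ R` not strictly below any cube of `BCE(R)`. -/
def TreeOf (cube : ι → Set α) (Ew : ι → ℝ≥0∞) (dl : ℝ≥0∞) (R : ι) : Set ι :=
  {Q | cube Q ⊆ cube R ∧ ∀ P ∈ BCE cube Ew dl R, ¬cube Q ⊂ cube P}

/-- Stopping-time packing estimate: if the cubes of `BCE(R)` are pairwise disjoint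
subsets of `R`, then `δλ · Σ_{P ∈ BCE(R)} μ(P) ≤ Σ_{Q ∈ Tree(R)} E(Q) μ(Q)`. -/
theorem stmt14 [Countable ι] [MeasurableSpace α] (cube : ι → Set α) (μ : Measure α)
    (Ew : ι → ℝ≥0∞) (δ lam : ℝ≥0∞) (R : ι)
    (hinj : Function.Injective cube)
    (hmeas : ∀ i, MeasurableSet (cube i))
    (hnest : ∀ i j : ι, (cube i ∩ cube j).Nonempty → cube i ⊆ cube j ∨ cube j ⊆ cube i)
    (hdisjBCE : ∀ P ∈ BCE cube Ew (δ * lam) R, ∀ P' ∈ BCE cube Ew (δ * lam) R,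
      P ≠ P' → Disjoint (cube P) (cube P')) :
    δ * lam * ∑' P : BCE cube Ew (δ * lam) R, μ (cube P) ≤
      ∑' Q : TreeOf cube Ew (δ * lam) R, Ew Q * μ (cube Q) := by
  classical
  set dl := δ * lam with hdl
  set B := BCE cube Ew dl R with hBdef
  set T := TreeOf cube Ew dl R with hTdef
  set g : ι × ι → ℝ≥0∞ := fun p =>
    if p.1 ∈ B ∧ cube p.1 ⊆ cube p.2 ∧ cube p.2 ⊆ cube R ∧ (cube p.1).Nonempty
    then Ew p.2 * μ (cube p.1) else 0 with hgdef
  have step1 : dl * ∑' P : B, μ (cube (P : ι)) ≤ ∑' p : ι × ι, g p := by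
    have e1 : dl * ∑' P : B, μ (cube (P : ι)) =
        ∑' P : ι, B.indicator (fun P => dl * μ (cube P)) P := by
      rw [← ENNReal.tsum_mul_left]
      exact tsum_subtype B (fun P => dl * μ (cube P))
    have e2 : ∑' p : ι × ι, g p = ∑' P : ι, ∑' S : ι, g (P, S) :=
      ENNReal.tsum_prod (f := fun P S => g (P, S))
    rw [e1, e2]
    refine Summable.tsum_le_tsum (fun P => ?_) ENNReal.summable ENNReal.summable
    by_cases hP : P ∈ B
    · rw [Set.indicator_of_mem hP]
      have hP' : cube P ⊆ cube R ∧ dl ≤ sumE cube Ew P R ∧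
          ∀ Q', cube P ⊆ cube Q' → cube Q' ⊆ cube R → dl ≤ sumE cube Ew Q' R →
            cube Q' = cube P := hP
      by_cases hne : (cube P).Nonempty
      · have hcong : ∀ S : ι, {S | cube P ⊆ cube S ∧ cube S ⊆ cube R}.indicator
            (fun S => Ew S * μ (cube P)) S = g (P, S) := by
          intro S
          by_cases hS : cube P ⊆ cube S ∧ cube S ⊆ cube R
          · rw [Set.indicator_of_mem
              (show S ∈ {S | cube P ⊆ cube S ∧ cube S ⊆ cube R} from hS)]
            simp only [hgdef]
            rw [if_pos ⟨hP, hS.1, hS.2, hne⟩]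
          · rw [Set.indicator_of_notMem
              (show S ∉ {S | cube P ⊆ cube S ∧ cube S ⊆ cube R} from hS)]
            simp only [hgdef]
            rw [if_neg]
            tauto
        calc dl * μ (cube P) ≤ sumE cube Ew P R * μ (cube P) :=
              mul_le_mul_left hP'.2.1 _
          _ = ∑' S : {S : ι // cube P ⊆ cube S ∧ cube S ⊆ cube R},
                Ew (S : ι) * μ (cube P) := by
              rw [sumE, ENNReal.tsum_mul_right]
          _ = ∑' S : ι, g (P, S) :=
              (tsum_subtype {S | cube P ⊆ cube S ∧ cube S ⊆ cube R}
                (fun S => Ew S * μ (cube P))).trans (tsum_congr hcong)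
      · rw [Set.not_nonempty_iff_eq_empty] at hne
        simp [hne]
    · rw [Set.indicator_of_notMem hP]
      exact zero_le
  have step2 : ∑' p : ι × ι, g p ≤ ∑' Q : T, Ew (Q : ι) * μ (cube (Q : ι)) := by
    have e1 : ∑' p : ι × ι, g p = ∑' S : ι, ∑' P : ι, g (P, S) :=
      (ENNReal.tsum_prod (f := fun P S => g (P, S))).trans
        (ENNReal.tsum_comm (f := fun P S => g (P, S)))
    have e2 : ∑' Q : T, Ew (Q : ι) * μ (cube (Q : ι)) =
        ∑' S : ι, T.indicator (fun S => Ew S * μ (cube S)) S :=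
      tsum_subtype T (fun S => Ew S * μ (cube S))
    rw [e1, e2]
    refine Summable.tsum_le_tsum (fun S => ?_) ENNReal.summable ENNReal.summable
    by_cases h : ∃ P, P ∈ B ∧ cube P ⊆ cube S ∧ cube S ⊆ cube R ∧ (cube P).Nonempty
    · obtain ⟨P0, hP0B, hP0S, hSR, hne0⟩ := h
      have hST : S ∈ T := by
        refine ⟨hSR, fun P' hP' hss => ?_⟩
        by_cases hPP : P0 = P'
        · subst hPP; exact hss.not_subset hP0S
        · obtain ⟨x, hx⟩ := hne0
          exact Set.disjoint_left.mp (hdisjBCE P0 hP0B P' hP' hPP) hx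
            ((hP0S.trans hss.subset) hx)
      rw [Set.indicator_of_mem hST]
      set A : Set ι := {P | P ∈ B ∧ cube P ⊆ cube S ∧ (cube P).Nonempty} with hAdef
      have hgA : ∀ P, g (P, S) = A.indicator (fun P => Ew S * μ (cube P)) P := by
        intro P
        by_cases hPA : P ∈ A
        · have hPA' : P ∈ B ∧ cube P ⊆ cube S ∧ (cube P).Nonempty := hPA
          rw [Set.indicator_of_mem hPA]
          simp only [hgdef]
          rw [if_pos ⟨hPA'.1, hPA'.2.1, hSR, hPA'.2.2⟩]
        · rw [Set.indicator_of_notMem hPA]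
          simp only [hgdef]
          rw [if_neg]
          exact fun hc => hPA ⟨hc.1, hc.2.1, hc.2.2.2⟩
      calc ∑' P : ι, g (P, S) = ∑' P : A, Ew S * μ (cube (P : ι)) :=
            (tsum_congr hgA).trans
              (tsum_subtype A (fun P => Ew S * μ (cube P))).symm
        _ = Ew S * ∑' P : A, μ (cube (P : ι)) := ENNReal.tsum_mul_left
        _ ≤ Ew S * μ (cube S) := by
            refine mul_le_mul_right ?_ _
            have hdisj : Pairwise (Function.onFun Disjoint fun P : A => cube (P : ι)) := by
              intro P P' hne
              have h1 : (P : ι) ∈ B ∧ cube (P : ι) ⊆ cube S ∧ (cube (P : ι)).Nonempty := P.2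
              have h2 : (P' : ι) ∈ B ∧ cube (P' : ι) ⊆ cube S ∧ (cube (P' : ι)).Nonempty := P'.2
              exact hdisjBCE _ h1.1 _ h2.1 (fun e => hne (Subtype.ext e))
            rw [← MeasureTheory.measure_iUnion hdisj (fun P => hmeas _)]
            refine measure_mono (Set.iUnion_subset fun P => ?_)
            have h1 : (P : ι) ∈ B ∧ cube (P : ι) ⊆ cube S ∧ (cube (P : ι)).Nonempty := P.2
            exact h1.2.1
    · have hz : ∀ P, g (P, S) = 0 := by
        intro P
        simp only [hgdef]
        rw [if_neg]
        exact fun hc => h ⟨P, hc⟩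
      rw [tsum_congr hz]
      simp
  exact step1.trans step2
end
end

section
/- With the same stopping-time setup: for every R, Σ_{Q ∈ Tree(R)\BCE(R)} E(Q)μ(Q) ≤ δλ·μ(R). More precisely, since every Q ∈ Tree(R)\BCE(R) satisfies Σ_{Q ⊆ S ⊆ R} E(S) < δλ, and the function x ↦ Σ_{Q ∈ Tree(R)\BCE(R)} E(Q)1_Q(x) is pointwise bounded by δλ on R, integrating over R with respect to μ gives the bound. -/
open MeasureTheory Set
open scoped ENNReal

noncomputable section

variable {α ι : Type*}

private lemma exists_min_cube {α ι β : Type*} (cube : ι → Set α)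
    (hnest : ∀ i j : ι, (cube i ∩ cube j).Nonempty → cube i ⊆ cube j ∨ cube j ⊆ cube i)
    (x : α) (v : β → ι) (F : Finset β) (hne : F.Nonempty)
    (hx : ∀ Q ∈ F, x ∈ cube (v Q)) :
    ∃ Q0 ∈ F, ∀ Q ∈ F, cube (v Q0) ⊆ cube (v Q) := by
  classical
  induction F using Finset.induction with
  | empty => exact absurd hne (by simp)
  | @insert a F haF ih =>
    rcases F.eq_empty_or_nonempty with hF | hFne
    · exact ⟨a, by simp, by simp [hF]⟩
    · obtain ⟨Q0, hQ0F, hQ0min⟩ := ih hFne (fun Q hQ => hx Q (Finset.mem_insert_of_mem hQ))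
      have hxa : x ∈ cube (v a) := hx a (Finset.mem_insert_self a F)
      have hxQ0 : x ∈ cube (v Q0) := hx Q0 (Finset.mem_insert_of_mem hQ0F)
      rcases hnest (v a) (v Q0) ⟨x, hxa, hxQ0⟩ with h | h
      · refine ⟨a, Finset.mem_insert_self a F, fun Q hQ => ?_⟩
        rcases Finset.mem_insert.mp hQ with rfl | hQ
        · exact subset_rfl
        · exact h.trans (hQ0min Q hQ)
      · refine ⟨Q0, Finset.mem_insert_of_mem hQ0F, fun Q hQ => ?_⟩
        rcases Finset.mem_insert.mp hQ with rfl | hQ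
        · exact h
        · exact hQ0min Q hQ

/-- Inside each tree the energies are small: since every `Q ∈ Tree(R) \ BCE(R)` satisfies
`Σ_{Q ⊆ S ⊆ R} E(S) < δλ`, we have
`Σ_{Q ∈ Tree(R)\BCE(R)} E(Q) μ(Q) ≤ δλ · μ(R)`. -/
theorem stmt15 [Countable ι] [MeasurableSpace α] (cube : ι → Set α) (μ : Measure α)
    (Ew : ι → ℝ≥0∞) (δ lam : ℝ≥0∞) (R : ι)
    (hinj : Function.Injective cube)
    (hmeas : ∀ i, MeasurableSet (cube i))
    (hnest : ∀ i j : ι, (cube i ∩ cube j).Nonempty → cube i ⊆ cube j ∨ cube j ⊆ cube i)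
    (hstop : ∀ Q ∈ TreeOf cube Ew (δ * lam) R, Q ∉ BCE cube Ew (δ * lam) R →
      sumE cube Ew Q R < δ * lam) :
    (∑' Q : {Q : ι // Q ∈ TreeOf cube Ew (δ * lam) R ∧ Q ∉ BCE cube Ew (δ * lam) R},
        Ew Q * μ (cube Q)) ≤ δ * lam * μ (cube R) := by
  classical
  set dl := δ * lam with hdl
  set T := {Q : ι // Q ∈ TreeOf cube Ew dl R ∧ Q ∉ BCE cube Ew dl R} with hT
  have hQR : ∀ Q : T, cube Q.1 ⊆ cube R := fun Q => Q.2.1.1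
  calc (∑' Q : T, Ew Q.1 * μ (cube Q.1))
      = ∑' Q : T, ∫⁻ x, (cube Q.1).indicator (fun _ => Ew Q.1) x ∂μ := by
        refine tsum_congr fun Q => ?_
        rw [lintegral_indicator (hmeas Q.1) _, setLIntegral_const, mul_comm]
    _ = ∫⁻ x, ∑' Q : T, (cube Q.1).indicator (fun _ => Ew Q.1) x ∂μ :=
        (lintegral_tsum fun Q : T => (measurable_const.indicator (hmeas Q.1)).aemeasurable).symm
    _ ≤ ∫⁻ x, (cube R).indicator (fun _ => dl) x ∂μ := by
        refine lintegral_mono fun x => ?_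
        by_cases hxR : x ∈ cube R
        · rw [indicator_of_mem hxR]
          rw [ENNReal.tsum_eq_iSup_sum]
          refine iSup_le fun s => ?_
          set s' : Finset T := s.filter (fun Q => x ∈ cube Q.1) with hs'
          have hsum : ∑ Q ∈ s, (cube Q.1).indicator (fun _ => Ew Q.1) x
              = ∑ Q ∈ s', Ew Q.1 := by
            rw [hs', Finset.sum_filter]
            refine Finset.sum_congr rfl fun Q _ => ?_
            by_cases hxQ : x ∈ cube Q.1 <;> simp [indicator, hxQ]
          rw [hsum]
          rcases s'.eq_empty_or_nonempty with h | hne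
          · simp [h]
          -- find a minimal cube among s'
          have hmin : ∃ Q0 ∈ s', ∀ Q ∈ s', cube Q0.1 ⊆ cube Q.1 :=
            exists_min_cube cube hnest x (Subtype.val : T → ι) s' hne
              (fun Q hQ => (Finset.mem_filter.mp hQ).2)
          obtain ⟨Q0, hQ0s, hQ0min⟩ := hmin
          have hxQ0 : x ∈ cube Q0.1 := (Finset.mem_filter.mp hQ0s).2
          have hstopQ0 : sumE cube Ew Q0.1 R < dl := hstop Q0.1 Q0.2.1 Q0.2.2
          refine le_of_lt (lt_of_le_of_lt ?_ hstopQ0)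
          -- inject s' into the subtype defining sumE Q0 R
          rw [sumE]
          have hmem : ∀ Q ∈ s', cube Q0.1 ⊆ cube (Q : T).1 ∧ cube (Q : T).1 ⊆ cube R :=
            fun Q hQ => ⟨hQ0min Q hQ, hQR Q⟩
          calc ∑ Q ∈ s', Ew Q.1
              = ∑ Q ∈ s'.attach, Ew Q.1.1 := (Finset.sum_attach s' (fun Q => Ew Q.1)).symm
            _ = ∑ S ∈ s'.attach.image
                  (fun Q : {Q // Q ∈ s'} =>
                    (⟨Q.1.1, hmem Q.1 Q.2⟩ :
                      {S : ι // cube Q0.1 ⊆ cube S ∧ cube S ⊆ cube R})),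
                  Ew S.1 := by
                rw [Finset.sum_image]
                intro a _ b _ hab
                exact Subtype.ext (Subtype.ext (by simpa using congrArg Subtype.val hab))
            _ ≤ ∑' S : {S : ι // cube Q0.1 ⊆ cube S ∧ cube S ⊆ cube R}, Ew S.1 :=
                ENNReal.sum_le_tsum _
        · rw [indicator_of_notMem hxR]
          have h0 : ∀ Q : T, (cube Q.1).indicator (fun _ => Ew Q.1) x = 0 := fun Q =>
            indicator_of_notMem (fun hx => hxR (hQR Q hx)) _
          simp [h0]
    _ = dl * μ (cube R) := by
        rw [lintegral_indicator (hmeas R) _, setLIntegral_const, mul_comm]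
end
end
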